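/- arXiv:2303.16729 — 5 statements merged into one kernel-verified Lean document; each statement's English description precedes it below -/
import Mathlib

section
/- There is no binary self-orthogonal [118,7,58] code; that is, no 7-dimensional self-orthogonal subspace of F_2^118 has minimum distance 58. -/
open Finset

/-- Hamming weight of a binary vector. -/
def wt {ι : Type*} [Fintype ι] (x : ι → ZMod 2) : ℕ :=
  (Finset.univ.filter fun i => x i ≠ 0).card

/-- A binary linear code is self-orthogonal if any two codewords are orthogonal. -/
def SelfOrthogonal {ι : Type*} [Fintype ι] (C : Submodule (ZMod 2) (ι → ZMod 2)) : Prop :=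
  ∀ x ∈ C, ∀ y ∈ C, ∑ i, x i * y i = 0

/-- `C` has minimum distance exactly `d`: some nonzero codeword has weight `d`,
and every nonzero codeword has weight at least `d`. -/
def HasMinDist {ι : Type*} [Fintype ι] (C : Submodule (ZMod 2) (ι → ZMod 2)) (d : ℕ) : Prop :=
  (∃ x ∈ C, x ≠ 0 ∧ wt x = d) ∧ ∀ x ∈ C, x ≠ 0 → d ≤ wt x

/-- The Griesmer function `g(k,d) = ∑_{i=0}^{k-1} ⌈d/2^i⌉` (ceiling division). -/
def griesmerBound (k d : ℕ) : ℕ :=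
  ∑ i ∈ Finset.range k, (d + 2 ^ i - 1) / 2 ^ i

lemma wt_eq_sum {ι : Type*} [Fintype ι] (x : ι → ZMod 2) :
    wt x = ∑ i, (x i).val := by
  rw [wt, Finset.card_filter]
  refine Finset.sum_congr rfl fun i _ => ?_
  have h : ∀ a : ZMod 2, (if a ≠ 0 then 1 else 0) = a.val := by decide
  simp only [← h]

lemma sum_val_mod_two {ι : Type*} [Fintype ι] (f : ι → ZMod 2) :
    (∑ i, (f i).val) % 2 = (∑ i, f i).val := by
  have : ((∑ i, (f i).val : ℕ) : ZMod 2) = ∑ i, f i := by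
    push_cast
    refine Finset.sum_congr rfl fun i _ => ?_
    rw [ZMod.natCast_val, ZMod.cast_id]
  rw [← ZMod.val_natCast, this]

lemma key {ι : Type*} [Fintype ι] (x y : ι → ZMod 2)
    (h : ∑ i, x i * y i = 0) : wt (x + y) % 4 = (wt x + wt y) % 4 := by
  have hpt : ∀ i, (x i).val + (y i).val = ((x + y) i).val + 2 * ((x i) * (y i)).val := by
    intro i
    simp only [Pi.add_apply]
    have h : ∀ a b : ZMod 2, a.val + b.val = (a + b).val + 2 * (a * b).val := by decide
    exact h _ _
  have hsum : wt x + wt y = wt (x + y) + 2 * ∑ i, ((x i) * (y i)).val := by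
    rw [wt_eq_sum, wt_eq_sum, wt_eq_sum, ← Finset.sum_add_distrib, Finset.mul_sum,
      ← Finset.sum_add_distrib]
    exact Finset.sum_congr rfl fun i _ => hpt i
  have hS : (∑ i, ((x i) * (y i)).val) % 2 = 0 := by
    rw [sum_val_mod_two, h]; rfl
  omega

lemma wt_zero {ι : Type*} [Fintype ι] : wt (0 : ι → ZMod 2) = 0 := by
  simp [wt]

lemma ne_zero_iff_one' : ∀ a : ZMod 2, a ≠ 0 ↔ a = 1 := by decide
lemma ne_zero_iff_one (a : ZMod 2) : a ≠ 0 ↔ a = 1 := ne_zero_iff_one' a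

theorem stmt14 :
    ¬ ∃ C : Submodule (ZMod 2) (Fin 118 → ZMod 2),
      Module.finrank (ZMod 2) C = 7 ∧ SelfOrthogonal C ∧ HasMinDist C 58 := by
  rintro ⟨C, hrank, hSO, ⟨⟨x₀, hx₀C, hx₀ne, hx₀wt⟩, hmin⟩⟩
  classical
  -- all codewords have even weight
  have heven : ∀ x ∈ C, wt x % 2 = 0 := by
    intro x hx
    have h := key x x (hSO x hx x hx)
    have hxx : x + x = 0 := by
      funext i; exact CharTwo.add_self_eq_zero (x i)
    rw [hxx, wt_zero] at h
    omega
  -- the finset of codewords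
  haveI : Fintype (C : Set (Fin 118 → ZMod 2)) := Fintype.ofFinite _
  obtain ⟨T, hT⟩ : ∃ T : Finset (Fin 118 → ZMod 2), T = (C : Set (Fin 118 → ZMod 2)).toFinset :=
    ⟨_, rfl⟩
  have hmemT : ∀ x, x ∈ T ↔ x ∈ C := fun x => by rw [hT]; exact Set.mem_toFinset
  have hTcard : T.card = 128 := by
    rw [hT, Set.toFinset_card]
    have := Module.card_eq_pow_finrank (K := ZMod 2) (V := ↥C)
    rw [ZMod.card, hrank] at this
    exact this
  obtain ⟨D, hD⟩ : ∃ D, D = T.filter (fun x => wt x % 4 = 0) := ⟨_, rfl⟩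
  obtain ⟨E, hE⟩ : ∃ E, E = T.filter (fun x => ¬ wt x % 4 = 0) := ⟨_, rfl⟩
  have hDE : D.card + E.card = 128 := by
    rw [hD, hE, Finset.card_filter_add_card_filter_not, hTcard]
  -- bijection between D and E via adding x₀
  have hDEcard : D.card = E.card := by
    apply Finset.card_bij' (fun x _ => x + x₀) (fun y _ => y + x₀)
    · intro x hx
      rw [hD, Finset.mem_filter, hmemT] at hx
      rw [hE, Finset.mem_filter, hmemT]
      have hmem : x + x₀ ∈ C := C.add_mem hx.1 hx₀C
      have hk := key x x₀ (hSO x hx.1 x₀ hx₀C)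
      constructor
      · exact hmem
      · rw [hk, hx₀wt]; omega
    · intro y hy
      rw [hE, Finset.mem_filter, hmemT] at hy
      rw [hD, Finset.mem_filter, hmemT]
      have hmem : y + x₀ ∈ C := C.add_mem hy.1 hx₀C
      have hk := key y x₀ (hSO y hy.1 x₀ hx₀C)
      have he := heven y hy.1
      constructor
      · exact hmem
      · rw [hk, hx₀wt]; omega
    · intro x _
      have hxx : x₀ + x₀ = 0 := funext fun i => CharTwo.add_self_eq_zero _
      rw [add_assoc, hxx, add_zero]
    · intro y _
      have hxx : x₀ + x₀ = 0 := funext fun i => CharTwo.add_self_eq_zero _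
      rw [add_assoc, hxx, add_zero]
  have hDcard : D.card = 64 := by omega
  -- per-coordinate count in D is at most 32
  have hcoord : ∀ j : Fin 118, (D.filter fun x => x j ≠ 0).card ≤ 32 := by
    intro j
    obtain ⟨Dj, hDj⟩ : ∃ Dj, Dj = D.filter (fun x => x j ≠ 0) := ⟨_, rfl⟩
    rw [← hDj]
    rcases Finset.eq_empty_or_nonempty Dj with h | ⟨u, hu⟩
    · rw [h]; simp
    · rw [hDj] at hu
      have huD : u ∈ D := (Finset.mem_filter.mp hu).1
      have huj : u j = 1 := (ne_zero_iff_one _).mp (Finset.mem_filter.mp hu).2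
      have huD' := huD
      rw [hD, Finset.mem_filter, hmemT] at huD'
      have huC : u ∈ C := huD'.1
      have huw : wt u % 4 = 0 := huD'.2
      have hinj : ∀ x ∈ Dj, x + u ∈ D.filter (fun x => ¬ x j ≠ 0) := by
        intro x hx
        rw [hDj, Finset.mem_filter] at hx
        obtain ⟨hxD, hxj⟩ := hx
        rw [hD, Finset.mem_filter, hmemT] at hxD
        have hxj1 : x j = 1 := (ne_zero_iff_one _).mp hxj
        rw [Finset.mem_filter, hD, Finset.mem_filter, hmemT]
        refine ⟨⟨C.add_mem hxD.1 huC, ?_⟩, ?_⟩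
        · have hk := key x u (hSO x hxD.1 u huC)
          have := hxD.2
          omega
        · show ¬ (x j + u j ≠ 0)
          rw [hxj1, huj]
          decide
      have hcard : Dj.card ≤ (D.filter (fun x => ¬ x j ≠ 0)).card := by
        apply Finset.card_le_card_of_injOn (fun x => x + u) hinj
        intro a _ b _ hab
        exact add_right_cancel hab
      have hsplit : (D.filter (fun x => x j ≠ 0)).card
          + (D.filter (fun x => ¬ x j ≠ 0)).card = D.card :=
        Finset.card_filter_add_card_filter_not (s := D) (p := fun x => x j ≠ 0)
      have hDjc : Dj.card = (D.filter (fun x => x j ≠ 0)).card := by rw [hDj]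
      have h2 : Dj.card + (D.filter (fun x => ¬ x j ≠ 0)).card = 64 := by
        rw [hDjc, hsplit, hDcard]
      generalize (D.filter (fun x => ¬ x j ≠ 0)).card = b at hcard h2
      clear * - hcard h2
      omega
  -- total weight over D : upper bound
  have hup : ∑ x ∈ D, wt x ≤ 3776 := by
    have hswap : ∑ x ∈ D, wt x = ∑ j : Fin 118, (D.filter fun x => x j ≠ 0).card := by
      have : ∀ x, wt x = ∑ j : Fin 118, if x j ≠ 0 then 1 else 0 := by
        intro x; rw [wt, Finset.card_filter]
      calc ∑ x ∈ D, wt x = ∑ x ∈ D, ∑ j : Fin 118, if x j ≠ 0 then 1 else 0 :=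
            Finset.sum_congr rfl fun x _ => this x
        _ = ∑ j : Fin 118, ∑ x ∈ D, if x j ≠ 0 then 1 else 0 := Finset.sum_comm
        _ = ∑ j : Fin 118, (D.filter fun x => x j ≠ 0).card := by
            refine Finset.sum_congr rfl fun j _ => ?_
            rw [Finset.card_filter]
    rw [hswap]
    calc ∑ j : Fin 118, (D.filter fun x => x j ≠ 0).card
        ≤ ∑ _j : Fin 118, 32 := Finset.sum_le_sum fun j _ => hcoord j
      _ = 3776 := by simp
  -- total weight over D : lower bound
  have h0D : (0 : Fin 118 → ZMod 2) ∈ D := by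
    rw [hD, Finset.mem_filter, hmemT]
    exact ⟨C.zero_mem, by rw [wt_zero]⟩
  have hlow : 3780 ≤ ∑ x ∈ D, wt x := by
    have hErase : ∑ x ∈ D, wt x = ∑ x ∈ D.erase 0, wt x := by
      rw [← Finset.add_sum_erase D wt h0D, wt_zero, zero_add]
    have hcardE : (D.erase 0).card = 63 := by
      rw [Finset.card_erase_of_mem h0D, hDcard]
    have hge : ∀ x ∈ D.erase 0, 60 ≤ wt x := by
      intro x hx
      obtain ⟨hxne, hxD⟩ := Finset.mem_erase.mp hx
      rw [hD, Finset.mem_filter, hmemT] at hxD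
      have h58 := hmin x hxD.1 hxne
      have := hxD.2
      omega
    calc (3780 : ℕ) = 63 * 60 := by norm_num
      _ = (D.erase 0).card * 60 := by rw [hcardE]
      _ ≤ ∑ x ∈ D.erase 0, wt x := Finset.card_nsmul_le_sum _ _ _ hge
      _ = ∑ x ∈ D, wt x := hErase.symm
  omega
end

section
/- There is no binary self-orthogonal [110,7,54] code; that is, no 7-dimensional self-orthogonal subspace of F_2^110 has minimum distance 54. -/
open Finset

private lemma zmod2_mul_eq : ∀ a b : ZMod 2, a * b = if a ≠ 0 ∧ b ≠ 0 then 1 else 0 := by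
  decide

private lemma sum_mul_eq_card {ι : Type*} [Fintype ι] [DecidableEq ι] (x y : ι → ZMod 2) :
    ∑ i, x i * y i = ((Finset.univ.filter fun i => x i ≠ 0 ∧ y i ≠ 0).card : ZMod 2) := by
  classical
  rw [Finset.card_filter]
  push_cast
  refine Finset.sum_congr rfl fun i _ => ?_
  rw [zmod2_mul_eq]

private lemma zmod2_add_ne : ∀ a b : ZMod 2, (a + b ≠ 0 ↔ ((a ≠ 0 ∨ b ≠ 0) ∧ ¬(a ≠ 0 ∧ b ≠ 0))) := by
  decide

/-- Weight of a sum: `wt (x+y) = wt x + wt y - 2|supp x ∩ supp y|`. -/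
private lemma wt_add_eq {ι : Type*} [Fintype ι] (x y : ι → ZMod 2) :
    wt (x + y) + 2 * (Finset.univ.filter fun i => x i ≠ 0 ∧ y i ≠ 0).card = wt x + wt y := by
  classical
  set A : Finset ι := Finset.univ.filter fun i => x i ≠ 0
  set B : Finset ι := Finset.univ.filter fun i => y i ≠ 0
  have hI : (Finset.univ.filter fun i => x i ≠ 0 ∧ y i ≠ 0) = A ∩ B := by
    ext i; simp [A, B]
  have hS : (Finset.univ.filter fun i => (x + y) i ≠ 0) = (A ∪ B) \ (A ∩ B) := by
    ext i
    simp only [Finset.mem_filter, Finset.mem_univ, true_and, Finset.mem_sdiff,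
      Finset.mem_union, Finset.mem_inter, A, B, Pi.add_apply]
    have := zmod2_add_ne (x i) (y i)
    tauto
  have hsub : A ∩ B ⊆ A ∪ B := (Finset.inter_subset_left).trans Finset.subset_union_left
  have h1 : (A ∪ B).card + (A ∩ B).card = A.card + B.card :=
    Finset.card_union_add_card_inter A B
  have h2 : ((A ∪ B) \ (A ∩ B)).card + (A ∩ B).card = (A ∪ B).card :=
    Finset.card_sdiff_add_card_eq_card hsub
  have hwx : wt x = A.card := rfl
  have hwy : wt y = B.card := rfl
  have hws : wt (x + y) = ((A ∪ B) \ (A ∩ B)).card := by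
    unfold wt; rw [hS]
  rw [hI, hwx, hwy, hws]
  omega

set_option maxRecDepth 8000 in
theorem stmt15 :
    ¬ ∃ C : Submodule (ZMod 2) (Fin 110 → ZMod 2),
      Module.finrank (ZMod 2) C = 7 ∧ SelfOrthogonal C ∧ HasMinDist C 54 := by
  classical
  rintro ⟨C, hrank, hSO, ⟨⟨x0, hx0C, hx0ne, hx0wt⟩, hmin⟩⟩
  -- intersection of supports of two codewords is even
  have hpar : ∀ x ∈ C, ∀ y ∈ C,
      (Finset.univ.filter fun i => x i ≠ 0 ∧ y i ≠ 0).card % 2 = 0 := by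
    intro x hx y hy
    have h := hSO x hx y hy
    rw [sum_mul_eq_card] at h
    have := (ZMod.natCast_eq_zero_iff _ 2).mp h
    omega
  -- weights are even
  have heven : ∀ x ∈ C, wt x % 2 = 0 := by
    intro x hx
    have h := hpar x hx x hx
    have : (Finset.univ.filter fun i => x i ≠ 0 ∧ x i ≠ 0) =
        (Finset.univ.filter fun i => x i ≠ 0) := by
      ext i; simp
    rw [this] at h
    exact h
  -- weight is additive mod 4 on the code
  have hadd4 : ∀ x ∈ C, ∀ y ∈ C, wt (x + y) % 4 = (wt x + wt y) % 4 := by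
    intro x hx y hy
    have h1 := wt_add_eq x y
    have h2 := hpar x hx y hy
    omega
  have hvv : ∀ v : Fin 110 → ZMod 2, v + v = 0 := by
    intro v; funext i
    have : ∀ a : ZMod 2, a + a = 0 := by decide
    exact this (v i)
  -- the code and its doubly-even subcode as finsets
  obtain ⟨Cs, hCs⟩ : ∃ Cs : Finset (Fin 110 → ZMod 2), Cs = Finset.univ.filter (· ∈ C) :=
    ⟨_, rfl⟩
  obtain ⟨D, hD⟩ : ∃ D : Finset (Fin 110 → ZMod 2), D = Cs.filter (fun x => wt x % 4 = 0) :=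
    ⟨_, rfl⟩
  have hmemCs : ∀ x, x ∈ Cs ↔ x ∈ C := by intro x; rw [hCs]; simp
  have hmemD : ∀ x, x ∈ D ↔ x ∈ C ∧ wt x % 4 = 0 := by
    intro x; rw [hD, Finset.mem_filter, hCs]; simp [and_comm]
  -- |Cs| = 128
  have hcardCs : Cs.card = 128 := by
    have h1 : Fintype.card C = Fintype.card (ZMod 2) ^ Module.finrank (ZMod 2) C :=
      Module.card_eq_pow_finrank
    rw [hrank, ZMod.card] at h1
    have h2 : Fintype.card C = Cs.card := by
      rw [hCs]
      exact Fintype.card_subtype _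
    omega
  -- wt x0 % 4 = 2
  have hx0m : wt x0 % 4 = 2 := by rw [hx0wt]
  -- D is closed under addition
  have hDadd : ∀ x ∈ D, ∀ y ∈ D, x + y ∈ D := by
    intro x hx y hy
    rw [hmemD] at hx hy ⊢
    refine ⟨C.add_mem hx.1 hy.1, ?_⟩
    have := hadd4 x hx.1 y hy.1
    omega
  -- |D| = 64 via the bijection x ↦ x + x0 between D and Cs \ D
  have hcardD : D.card = 64 := by
    have hbij : D.card = (Cs \ D).card := by
      apply Finset.card_bij' (fun x _ => x + x0) (fun y _ => y + x0)
      · intro x hx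
        rw [hmemD] at hx
        rw [Finset.mem_sdiff, hmemCs, hmemD]
        have h4 := hadd4 x hx.1 x0 hx0C
        constructor
        · exact C.add_mem hx.1 hx0C
        · intro h; omega
      · intro y hy
        rw [Finset.mem_sdiff, hmemCs, hmemD] at hy
        obtain ⟨hyC, hynot⟩ := hy
        rw [hmemD]
        have h4 := hadd4 y hyC x0 hx0C
        have he := heven y hyC
        refine ⟨C.add_mem hyC hx0C, ?_⟩
        have : ¬ wt y % 4 = 0 := fun h => hynot ⟨hyC, h⟩
        omega
      · intro x _
        rw [add_assoc, hvv x0, add_zero]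
      · intro y _
        rw [add_assoc, hvv x0, add_zero]
    have hsub : D ⊆ Cs := by rw [hD]; exact Finset.filter_subset _ _
    have := Finset.card_sdiff_add_card_eq_card hsub
    omega
  -- each coordinate is nonzero on at most 32 elements of D
  have hcol : ∀ i : Fin 110, (D.filter fun x => x i ≠ 0).card ≤ 32 := by
    intro i
    rcases Finset.eq_empty_or_nonempty (D.filter fun x => x i ≠ 0) with h | ⟨a, ha⟩
    · rw [h]; simp
    · rw [Finset.mem_filter] at ha
      obtain ⟨haD, hai⟩ := ha
      have hinj : ∀ x ∈ (D.filter fun x => x i ≠ 0),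
          x + a ∈ D \ (D.filter fun x => x i ≠ 0) := by
        intro x hx
        rw [Finset.mem_filter] at hx
        rw [Finset.mem_sdiff]
        have hmem : x + a ∈ D := hDadd x hx.1 a haD
        refine ⟨hmem, fun hcon => ?_⟩
        rw [Finset.mem_filter] at hcon
        have h1 : ∀ u v : ZMod 2, u ≠ 0 → v ≠ 0 → u + v = 0 := by decide
        exact hcon.2 (h1 _ _ hx.2 hai)
      have hle : (D.filter fun x => x i ≠ 0).card ≤ (D \ (D.filter fun x => x i ≠ 0)).card := by
        refine Finset.card_le_card_of_injOn (fun x => x + a) (fun x hx => hinj x hx)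
          (fun x hx y hy hxy => ?_)
        have h1 : x + a = y + a := hxy
        have h2 : x + a + a = y + a + a := by rw [h1]
        rwa [add_assoc, add_assoc, hvv a, add_zero, add_zero] at h2
      have hZsub : (D.filter fun x => x i ≠ 0) ⊆ D := Finset.filter_subset _ _
      have hcards := Finset.card_sdiff_add_card_eq_card hZsub
      clear hinj
      generalize (D \ (D.filter fun x => x i ≠ 0)).card = G at hle hcards
      generalize (D.filter fun x => x i ≠ 0).card = F at hle hcards ⊢
      omega
  -- double counting the total weight of D
  have hsum_le : ∑ x ∈ D, wt x ≤ 3520 := by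
    have h1 : ∑ x ∈ D, wt x = ∑ i : Fin 110, (D.filter fun x => x i ≠ 0).card := by
      have : ∀ x, wt x = ∑ i : Fin 110, (if x i ≠ 0 then 1 else 0) := by
        intro x; rw [wt, Finset.card_filter]
      calc ∑ x ∈ D, wt x = ∑ x ∈ D, ∑ i : Fin 110, (if x i ≠ 0 then 1 else 0) := by
            exact Finset.sum_congr rfl fun x _ => this x
        _ = ∑ i : Fin 110, ∑ x ∈ D, (if x i ≠ 0 then 1 else 0) := Finset.sum_comm
        _ = ∑ i : Fin 110, (D.filter fun x => x i ≠ 0).card := by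
            exact Finset.sum_congr rfl fun i _ => (Finset.card_filter _ _).symm
    refine h1.trans_le ?_
    calc ∑ i : Fin 110, (D.filter fun x => x i ≠ 0).card
        ≤ ∑ i : Fin 110, 32 := Finset.sum_le_sum fun i _ => hcol i
      _ = 3520 := by simp
  -- but it must be at least 63 * 56 = 3528
  have h0D : (0 : Fin 110 → ZMod 2) ∈ D := by
    rw [hmemD]
    constructor
    · exact C.zero_mem
    · have : wt (0 : Fin 110 → ZMod 2) = 0 := by
        unfold wt; simp
      omega
  have hsum_ge : 3528 ≤ ∑ x ∈ D, wt x := by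
    have herase : (D.erase 0).card = 63 := by
      rw [Finset.card_erase_of_mem h0D, hcardD]
    have hlb : ∀ x ∈ D.erase 0, 56 ≤ wt x := by
      intro x hx
      have hxne : x ≠ 0 := Finset.ne_of_mem_erase hx
      have hxD := Finset.mem_of_mem_erase hx
      rw [hmemD] at hxD
      have := hmin x hxD.1 hxne
      have := hxD.2
      omega
    have h56 : (D.erase 0).card * 56 ≤ ∑ x ∈ D.erase 0, wt x := by
      simpa [smul_eq_mul] using Finset.card_nsmul_le_sum (D.erase 0) wt 56 hlb
    have hsub : ∑ x ∈ D.erase 0, wt x ≤ ∑ x ∈ D, wt x :=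
      Finset.sum_le_sum_of_subset (Finset.erase_subset _ _)
    generalize (D.erase 0).card = n at herase h56
    subst herase
    omega
  exact absurd (hsum_ge.trans hsum_le) (by norm_num)
end

section
/- There is no binary self-orthogonal [54,6,26] code; that is, no 6-dimensional self-orthogonal subspace of F_2^54 has minimum distance 26. -/
open Finset

lemma key16 : ∀ a b : ℕ, a = b → a + b = 32 → a ≤ 16 := by
  intro a b h1 h2
  omega

lemma pt16 (a b : ZMod 2) :
    (if a ≠ 0 then (1:ℕ) else 0) + (if b ≠ 0 then (1:ℕ) else 0)
      = (if a + b ≠ 0 then (1:ℕ) else 0) + 2 * (if a ≠ 0 ∧ b ≠ 0 then (1:ℕ) else 0) := by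
  revert a b
  decide

lemma wt_key16 {ι : Type*} [Fintype ι] (x y : ι → ZMod 2) :
    wt x + wt y = wt (x + y) + 2 * (Finset.univ.filter fun i => x i ≠ 0 ∧ y i ≠ 0).card := by
  classical
  simp only [wt, Finset.card_filter, Finset.mul_sum, ← Finset.sum_add_distrib]
  exact Finset.sum_congr rfl fun i _ => by rw [Pi.add_apply]; exact pt16 (x i) (y i)

lemma inner_eq16 {ι : Type*} [Fintype ι] (x y : ι → ZMod 2) :
    (∑ i, x i * y i)
      = (((Finset.univ.filter fun i => x i ≠ 0 ∧ y i ≠ 0).card : ℕ) : ZMod 2) := by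
  classical
  rw [Finset.card_filter, Nat.cast_sum]
  refine Finset.sum_congr rfl fun i _ => ?_
  have : ∀ a b : ZMod 2, a * b = (((if a ≠ 0 ∧ b ≠ 0 then (1:ℕ) else 0) : ℕ) : ZMod 2) := by
    decide
  exact this _ _

theorem stmt16 :
    ¬ ∃ C : Submodule (ZMod 2) (Fin 54 → ZMod 2),
      Module.finrank (ZMod 2) C = 6 ∧ SelfOrthogonal C ∧ HasMinDist C 26 := by
  classical
  rintro ⟨C, hrank, hSO, ⟨⟨x0, hx0C, hx0ne, hx0wt⟩, hmin⟩⟩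
  -- pairwise intersection cardinalities are even
  have hdvd : ∀ x ∈ C, ∀ y ∈ C,
      2 ∣ (Finset.univ.filter fun i => x i ≠ 0 ∧ y i ≠ 0).card := by
    intro x hx y hy
    have h := hSO x hx y hy
    rw [inner_eq16] at h
    exact (ZMod.natCast_eq_zero_iff _ 2).mp h
  have hwt_even : ∀ x ∈ C, 2 ∣ wt x := by
    intro x hx
    have h := hdvd x hx x hx
    simpa [wt, and_self] using h
  -- the linear functional x ↦ (wt x / 2) mod 2
  have hadd : ∀ x y : C,
      (((wt ((x + y : C) : Fin 54 → ZMod 2) / 2 : ℕ)) : ZMod 2)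
        = ((wt (x : Fin 54 → ZMod 2) / 2 : ℕ) : ZMod 2)
          + ((wt (y : Fin 54 → ZMod 2) / 2 : ℕ) : ZMod 2) := by
    intro x y
    set s := (Finset.univ.filter
      fun i => (x : Fin 54 → ZMod 2) i ≠ 0 ∧ (y : Fin 54 → ZMod 2) i ≠ 0).card with hs
    have key := wt_key16 (x : Fin 54 → ZMod 2) (y : Fin 54 → ZMod 2)
    have d1 := hwt_even _ x.2
    have d2 := hwt_even _ y.2
    have ds : 2 ∣ s := hdvd _ x.2 _ y.2
    have hcoe : ((x + y : C) : Fin 54 → ZMod 2)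
        = (x : Fin 54 → ZMod 2) + (y : Fin 54 → ZMod 2) := rfl
    rw [hcoe]
    have h2 : wt ((x : Fin 54 → ZMod 2) + (y : Fin 54 → ZMod 2)) / 2 + s
        = wt (x : Fin 54 → ZMod 2) / 2 + wt (y : Fin 54 → ZMod 2) / 2 := by
      omega
    have hs0 : ((s : ℕ) : ZMod 2) = 0 := (ZMod.natCast_eq_zero_iff _ 2).mpr ds
    have := congrArg (Nat.cast : ℕ → ZMod 2) h2
    push_cast at this ⊢
    rw [hs0, add_zero] at this
    exact this
  let ψ : C →ₗ[ZMod 2] ZMod 2 :=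
    { toFun := fun x => ((wt (x : Fin 54 → ZMod 2) / 2 : ℕ) : ZMod 2)
      map_add' := hadd
      map_smul' := by
        intro c x
        rcases (show c = 0 ∨ c = 1 by revert c; decide) with rfl | rfl
        · simp [wt]
        · simp }
  -- ψ is surjective
  have hψx0 : ψ ⟨x0, hx0C⟩ = 1 := by
    show ((wt x0 / 2 : ℕ) : ZMod 2) = 1
    rw [hx0wt]
    decide
  have hsurj : Function.Surjective ψ := by
    intro c
    rcases (show c = 0 ∨ c = 1 by revert c; decide) with rfl | rfl
    · exact ⟨0, map_zero ψ⟩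
    · exact ⟨⟨x0, hx0C⟩, hψx0⟩
  -- rank-nullity : kernel has finrank 5
  have hrn := LinearMap.finrank_range_add_finrank_ker ψ
  rw [LinearMap.range_eq_top.mpr hsurj, finrank_top, hrank] at hrn
  have hker : Module.finrank (ZMod 2) (LinearMap.ker ψ) = 5 := by
    have : Module.finrank (ZMod 2) (ZMod 2) = 1 := Module.finrank_self _
    omega
  -- push the kernel into the ambient space
  set K : Submodule (ZMod 2) (Fin 54 → ZMod 2) :=
    (LinearMap.ker ψ).map C.subtype with hKdef
  have hKrank : Module.finrank (ZMod 2) K = 5 := by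
    rw [hKdef, Submodule.finrank_map_subtype_eq, hker]
  have : Fintype ↥K := Fintype.ofFinite _
  have hKcard : Fintype.card ↥K = 32 := by
    rw [Module.card_eq_pow_finrank (K := ZMod 2) (V := ↥K), hKrank, ZMod.card]
    norm_num
  -- elements of K
  have hKC : ∀ x ∈ K, x ∈ C := by
    intro x hx
    obtain ⟨y, -, rfl⟩ := hx
    exact y.2
  have hK28 : ∀ x ∈ K, x ≠ 0 → 28 ≤ wt x := by
    intro x hx hne
    obtain ⟨y, hy, rfl⟩ := hx
    have hy' : ψ y = 0 := hy
    show 28 ≤ wt (y : Fin 54 → ZMod 2)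
    rw [show C.subtype y = (y : Fin 54 → ZMod 2) from rfl] at hne
    have h26 : 26 ≤ wt (y : Fin 54 → ZMod 2) := hmin _ y.2 hne
    have he : 2 ∣ wt (y : Fin 54 → ZMod 2) := hwt_even _ y.2
    have h0 : ((wt (y : Fin 54 → ZMod 2) / 2 : ℕ) : ZMod 2) = 0 := hy'
    have h4 : 2 ∣ wt (y : Fin 54 → ZMod 2) / 2 :=
      (ZMod.natCast_eq_zero_iff _ 2).mp h0
    omega
  -- Finset version of K
  set G : Finset (Fin 54 → ZMod 2) := (K : Set (Fin 54 → ZMod 2)).toFinset with hGdef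
  have hGmem : ∀ x, x ∈ G ↔ x ∈ K := fun x => Set.mem_toFinset
  have hGcard : G.card = 32 := by
    rw [hGdef, Set.toFinset_card]
    exact hKcard
  clear_value K G
  -- column counting: each coordinate is 1 on at most 16 elements of G
  have hcol : ∀ i : Fin 54, (G.filter fun x => x i ≠ 0).card ≤ 16 := by
    intro i
    by_cases h : ∃ y ∈ G, y i ≠ 0
    · obtain ⟨y, hyG, hyi⟩ := h
      have hbij : (G.filter fun x => x i ≠ 0).card
          = (G.filter fun x => ¬ x i ≠ 0).card := by
        have e1 : ∀ u v : ZMod 2, u ≠ 0 → v ≠ 0 → u + v = 0 := by decide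
        have e2 : ∀ u v : ZMod 2, ¬ u ≠ 0 → v ≠ 0 → u + v ≠ 0 := by decide
        have hinv : ∀ a : Fin 54 → ZMod 2, a + y + y = a := by
          intro a
          rw [add_assoc]
          simp [CharTwo.add_self_eq_zero]
        refine Finset.card_nbij' (fun x => x + y) (fun x => x + y) ?_ ?_ ?_ ?_
        · intro a ha
          simp only [Finset.mem_coe, Finset.mem_filter, hGmem] at ha ⊢
          refine ⟨K.add_mem ha.1 ((hGmem y).mp hyG), ?_⟩
          rw [Pi.add_apply]
          simp only [e1 _ _ ha.2 hyi, ne_eq, not_not]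
        · intro a ha
          simp only [Finset.mem_coe, Finset.mem_filter, hGmem] at ha ⊢
          exact ⟨K.add_mem ha.1 ((hGmem y).mp hyG), e2 _ _ ha.2 hyi⟩
        · intro a _
          exact hinv a
        · intro a _
          exact hinv a
      have hsplit := Finset.card_filter_add_card_filter_not
        (s := G) (p := fun x => x i ≠ 0)
      exact key16 _ _ hbij (hsplit.trans hGcard)
    · push_neg at h
      have : (G.filter fun x => x i ≠ 0).card = 0 := by
        rw [Finset.card_eq_zero, Finset.filter_eq_empty_iff]
        intro x hx
        simpa using h x hx
      exact this.le.trans (by norm_num)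
  -- upper bound for total weight
  have hsum_le : ∑ x ∈ G, wt x ≤ 864 := by
    have hswap : ∑ x ∈ G, wt x = ∑ i : Fin 54, (G.filter fun x => x i ≠ 0).card := by
      simp only [wt, Finset.card_filter]
      exact Finset.sum_comm
    rw [hswap]
    calc ∑ i : Fin 54, (G.filter fun x => x i ≠ 0).card
        ≤ ∑ _i : Fin 54, 16 := Finset.sum_le_sum fun i _ => hcol i
      _ = 864 := by simp
  -- lower bound for total weight
  have h0G : (0 : Fin 54 → ZMod 2) ∈ G := (hGmem 0).mpr K.zero_mem
  have hsum_ge : 868 ≤ ∑ x ∈ G, wt x := by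
    have hle : ∀ x ∈ G.erase 0, 28 ≤ wt x := by
      intro x hx
      obtain ⟨hne, hxG⟩ := Finset.mem_erase.mp hx
      exact hK28 x ((hGmem x).mp hxG) hne
    have h1 : (G.erase 0).card • 28 ≤ ∑ x ∈ G.erase 0, wt x :=
      Finset.card_nsmul_le_sum _ _ _ hle
    have h2 : (G.erase 0).card = 31 := by
      rw [Finset.card_erase_of_mem h0G, hGcard]
    have h3 : wt (0 : Fin 54 → ZMod 2) + ∑ x ∈ G.erase 0, wt x = ∑ x ∈ G, wt x :=
      Finset.add_sum_erase _ _ h0G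
    have h4 : wt (0 : Fin 54 → ZMod 2) = 0 := by simp [wt]
    rw [h2] at h1
    simp only [smul_eq_mul] at h1
    calc (868 : ℕ) = 0 + 31 * 28 := by norm_num
      _ ≤ wt (0 : Fin 54 → ZMod 2) + ∑ x ∈ G.erase 0, wt x := by
          exact Nat.add_le_add (Nat.zero_le _) h1
      _ = ∑ x ∈ G, wt x := h3
  exact absurd (hsum_ge.trans hsum_le) (by norm_num)
end

section
/- There is no binary self-orthogonal [46,6,22] code; that is, no 6-dimensional self-orthogonal subspace of F_2^46 has minimum distance 22. -/
set_option maxRecDepth 8000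


open Finset

section Aux

variable {ι : Type*} [Fintype ι]

/-- The inclusion–exclusion identity for Hamming weights of binary vectors. -/
lemma wt_add_main (x y : ι → ZMod 2) :
    wt (x + y) + 2 * (Finset.univ.filter fun i => x i ≠ 0 ∧ y i ≠ 0).card
      = wt x + wt y := by
  classical
  set A := Finset.univ.filter fun i => x i ≠ 0 with hA
  set B := Finset.univ.filter fun i => y i ≠ 0 with hB
  have hAB : (Finset.univ.filter fun i => (x + y) i ≠ 0) = (A \ B) ∪ (B \ A) := by
    ext i
    have h2 : ∀ a b : ZMod 2,
        (a + b ≠ 0 ↔ (a ≠ 0 ∧ ¬ b ≠ 0) ∨ (b ≠ 0 ∧ ¬ a ≠ 0)) := by decide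
    simp only [hA, hB, Finset.mem_union, Finset.mem_sdiff, Finset.mem_filter,
      Finset.mem_univ, true_and, Pi.add_apply]
    exact h2 (x i) (y i)
  have hI : A ∩ B = Finset.univ.filter fun i => x i ≠ 0 ∧ y i ≠ 0 := by
    rw [hA, hB, ← Finset.filter_and]
  have hdisj : Disjoint (A \ B) (B \ A) := disjoint_sdiff_sdiff
  have h1 : (A \ B).card + (A ∩ B).card = A.card := Finset.card_sdiff_add_card_inter A B
  have h2 : (B \ A).card + (B ∩ A).card = B.card := Finset.card_sdiff_add_card_inter B A
  have hBA : (B ∩ A) = (A ∩ B) := Finset.inter_comm B A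
  have hwxy : wt (x + y) = (A \ B).card + (B \ A).card := by
    rw [wt, hAB, Finset.card_union_of_disjoint hdisj]
  have hwx : wt x = A.card := rfl
  have hwy : wt y = B.card := rfl
  rw [hwxy, hwx, hwy, ← hI]
  rw [hBA] at h2
  omega

lemma cast_inter (x y : ι → ZMod 2) :
    (((Finset.univ.filter fun i => x i ≠ 0 ∧ y i ≠ 0).card : ℕ) : ZMod 2)
      = ∑ i, x i * y i := by
  classical
  rw [← Finset.sum_boole]
  refine Finset.sum_congr rfl fun i _ => ?_
  have h : ∀ a b : ZMod 2, (if a ≠ 0 ∧ b ≠ 0 then (1 : ZMod 2) else 0) = a * b := by decide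
  exact h (x i) (y i)

end Aux

theorem stmt17 :
    ¬ ∃ C : Submodule (ZMod 2) (Fin 46 → ZMod 2),
      Module.finrank (ZMod 2) C = 6 ∧ SelfOrthogonal C ∧ HasMinDist C 22 := by
  classical
  rintro ⟨C, h6, hSO, ⟨x0, hx0C, hx0ne, hx0wt⟩, hmin⟩
  -- intersections of supports of codewords are even
  have hinter : ∀ x ∈ C, ∀ y ∈ C,
      2 ∣ (Finset.univ.filter fun i => x i ≠ 0 ∧ y i ≠ 0).card := by
    intro x hx y hy
    have h := hSO x hx y hy
    rw [← cast_inter] at h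
    exact (ZMod.natCast_eq_zero_iff _ 2).mp h
  -- weights are even
  have heven : ∀ x ∈ C, 2 ∣ wt x := by
    intro x hx
    have h := hinter x hx x hx
    have he : (Finset.univ.filter fun i => x i ≠ 0 ∧ x i ≠ 0)
        = Finset.univ.filter fun i => x i ≠ 0 := by simp
    rw [he] at h
    exact h
  -- weight is additive mod 4
  have hmod4 : ∀ x ∈ C, ∀ y ∈ C, wt (x + y) % 4 = (wt x + wt y) % 4 := by
    intro x hx y hy
    have h1 := wt_add_main x y
    obtain ⟨m, hm⟩ := hinter x hx y hy
    omega
  -- the finset of codewords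
  let D : Finset (Fin 46 → ZMod 2) := Finset.univ.filter (fun x => x ∈ C)
  have hDmem : ∀ x, x ∈ D ↔ x ∈ C := fun x => by simp [D]
  have hDcard : D.card = 64 := by
    have hft : Fintype.card C = 64 := by
      have h := Module.card_eq_pow_finrank (K := ZMod 2) (V := C)
      rw [h6, ZMod.card] at h
      simpa using h
    have h1 : Fintype.card D = D.card := Fintype.card_coe D
    have h2 : Nat.card D = Nat.card C :=
      Nat.card_congr (Equiv.subtypeEquivRight (fun x => hDmem x))
    rw [Nat.card_eq_fintype_card, Nat.card_eq_fintype_card] at h2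
    omega
  -- the doubly-even subcode as a finset
  let T : Finset (Fin 46 → ZMod 2) := D.filter (fun x => wt x % 4 = 0)
  have hx0w4 : wt x0 % 4 = 2 := by rw [hx0wt]
  -- x0 has weight 22 ≡ 2 mod 4, giving an involution between T and its complement in D
  have hvv : ∀ v : Fin 46 → ZMod 2, v + v = 0 := by
    intro v; funext i
    simpa using CharTwo.add_self_eq_zero (v i)
  have hTcard : T.card = 32 := by
    have hsplit := Finset.card_filter_add_card_filter_not
      (s := D) (p := fun x => wt x % 4 = 0)
    have hbij : (D.filter (fun x => wt x % 4 = 0)).card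
        = (D.filter (fun x => ¬ wt x % 4 = 0)).card := by
      apply Finset.card_bij' (fun x _ => x + x0) (fun x _ => x + x0)
      · intro x hx
        rw [Finset.mem_filter] at hx ⊢
        obtain ⟨hxD, hx4⟩ := hx
        have hxC := (hDmem x).mp hxD
        refine ⟨(hDmem _).mpr (C.add_mem hxC hx0C), ?_⟩
        have := hmod4 x hxC x0 hx0C
        omega
      · intro x hx
        rw [Finset.mem_filter] at hx ⊢
        obtain ⟨hxD, hx4⟩ := hx
        have hxC := (hDmem x).mp hxD
        refine ⟨(hDmem _).mpr (C.add_mem hxC hx0C), ?_⟩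
        have h4 := hmod4 x hxC x0 hx0C
        have h2 := heven x hxC
        omega
      · intro x _
        rw [add_assoc, hvv x0, add_zero]
      · intro x _
        rw [add_assoc, hvv x0, add_zero]
    have : T.card = (D.filter (fun x => ¬ wt x % 4 = 0)).card := hbij
    rw [hDcard] at hsplit
    omega
  -- every column meets T in at most 16 codewords
  have hcol : ∀ i : Fin 46, (T.filter fun x => x i ≠ 0).card ≤ 16 := by
    intro i
    by_cases hz : ∃ z ∈ T, z i ≠ 0
    · obtain ⟨z, hzT, hzi⟩ := hz
      have hzC : z ∈ C := (hDmem z).mp (Finset.mem_filter.mp hzT).1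
      have hz4 : wt z % 4 = 0 := (Finset.mem_filter.mp hzT).2
      have hclosed : ∀ x ∈ T, x + z ∈ T := by
        intro x hx
        rw [Finset.mem_filter] at hx ⊢
        obtain ⟨hxD, hx4⟩ := hx
        have hxC := (hDmem x).mp hxD
        refine ⟨(hDmem _).mpr (C.add_mem hxC hzC), ?_⟩
        have := hmod4 x hxC z hzC
        omega
      have hbij : (T.filter fun x => x i ≠ 0).card
          = (T.filter fun x => ¬ x i ≠ 0).card := by
        apply Finset.card_bij' (fun x _ => x + z) (fun x _ => x + z)
        · intro x hx
          rw [Finset.mem_filter] at hx ⊢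
          obtain ⟨hxT, hxi⟩ := hx
          refine ⟨hclosed x hxT, ?_⟩
          have h : ∀ a b : ZMod 2, a ≠ 0 → b ≠ 0 → ¬ (a + b ≠ 0) := by decide
          simpa using h (x i) (z i) hxi hzi
        · intro x hx
          rw [Finset.mem_filter] at hx ⊢
          obtain ⟨hxT, hxi⟩ := hx
          refine ⟨hclosed x hxT, ?_⟩
          have h : ∀ a b : ZMod 2, ¬ (a ≠ 0) → b ≠ 0 → (a + b ≠ 0) := by decide
          simpa using h (x i) (z i) hxi hzi
        · intro x _
          rw [add_assoc, hvv z, add_zero]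
        · intro x _
          rw [add_assoc, hvv z, add_zero]
      have hsplit := Finset.card_filter_add_card_filter_not
        (s := T) (p := fun x => x i ≠ 0)
      rw [hTcard] at hsplit
      generalize (T.filter fun x => x i ≠ 0).card = a at *
      generalize (T.filter fun x => ¬ x i ≠ 0).card = b at *
      omega
    · push_neg at hz
      have : T.filter (fun x => x i ≠ 0) = ∅ := by
        apply Finset.filter_eq_empty_iff.mpr
        intro x hx
        simpa using hz x hx
      rw [this]
      simp
  -- total weight over T, counted by columns
  have hsum : ∑ x ∈ T, wt x = ∑ i : Fin 46, (T.filter fun x => x i ≠ 0).card := by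
    have h1 : ∀ x, wt x = ∑ i : Fin 46, if x i ≠ 0 then 1 else 0 := by
      intro x; rw [wt, Finset.card_filter]
    calc ∑ x ∈ T, wt x = ∑ x ∈ T, ∑ i : Fin 46, if x i ≠ 0 then 1 else 0 :=
          Finset.sum_congr rfl fun x _ => h1 x
      _ = ∑ i : Fin 46, ∑ x ∈ T, if x i ≠ 0 then 1 else 0 := Finset.sum_comm
      _ = ∑ i : Fin 46, (T.filter fun x => x i ≠ 0).card :=
          Finset.sum_congr rfl fun i _ => (Finset.card_filter _ _).symm
  -- upper bound 736
  have hupper : ∑ x ∈ T, wt x ≤ 736 := by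
    rw [hsum]
    calc ∑ i : Fin 46, (T.filter fun x => x i ≠ 0).card
        ≤ ∑ _i : Fin 46, 16 := Finset.sum_le_sum fun i _ => hcol i
      _ = 736 := by simp
  -- lower bound 744
  have h0T : (0 : Fin 46 → ZMod 2) ∈ T := by
    rw [Finset.mem_filter]
    constructor
    · exact (hDmem 0).mpr C.zero_mem
    · have : wt (0 : Fin 46 → ZMod 2) = 0 := by simp [wt]
      rw [this]
  have hlower : 744 ≤ ∑ x ∈ T, wt x := by
    have hsub : T.erase 0 ⊆ T := Finset.erase_subset 0 T
    have hle1 : ∑ x ∈ T.erase 0, wt x ≤ ∑ x ∈ T, wt x :=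
      Finset.sum_le_sum_of_subset hsub
    have hcarde : (T.erase 0).card = 31 := by
      rw [Finset.card_erase_of_mem h0T, hTcard]
    have hwge : ∀ x ∈ T.erase 0, 24 ≤ wt x := by
      intro x hx
      obtain ⟨hxne, hxT⟩ := Finset.mem_erase.mp hx
      rw [Finset.mem_filter] at hxT
      have hxC := (hDmem x).mp hxT.1
      have h22 := hmin x hxC hxne
      have h4 : wt x % 4 = 0 := hxT.2
      clear * - h22 h4
      generalize wt x = w at *
      omega
    have : (T.erase 0).card * 24 ≤ ∑ x ∈ T.erase 0, wt x := by
      calc (T.erase 0).card * 24 = ∑ _x ∈ T.erase 0, 24 := by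
            rw [Finset.sum_const, smul_eq_mul]
        _ ≤ ∑ x ∈ T.erase 0, wt x := Finset.sum_le_sum hwge
    rw [hcarde] at this
    clear * - this hle1
    generalize (∑ x ∈ T.erase 0, wt x) = sA at *
    generalize (∑ x ∈ T, wt x) = sB at *
    omega
  exact absurd (hlower.trans hupper) (by norm_num)
end

section
/- There is no binary self-orthogonal [72,7,34] code; that is, no 7-dimensional self-orthogonal subspace of F_2^72 has minimum distance 34. -/
open Finset

section Helpers

variable {ι : Type*} [Fintype ι]

lemma wt_split (x : ι → ZMod 2) (q : ι → Prop) [DecidablePred q] :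
    wt x = (univ.filter fun i => x i ≠ 0 ∧ q i).card
         + (univ.filter fun i => x i ≠ 0 ∧ ¬ q i).card := by
  classical
  unfold wt
  rw [← Finset.filter_filter, ← Finset.filter_filter,
    Finset.card_filter_add_card_filter_not]

lemma sum_eq_wt (x : ι → ZMod 2) : ∑ i, x i = (wt x : ZMod 2) := by
  classical
  have h1 : ∑ i, x i = ∑ i ∈ univ.filter (fun i => x i ≠ 0), x i :=
    (Finset.sum_filter_ne_zero _).symm
  have h2 : ∀ i ∈ univ.filter (fun i => x i ≠ 0), x i = 1 := by
    intro i hi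
    simp only [mem_filter] at hi
    have : ∀ a : ZMod 2, a ≠ 0 → a = 1 := by decide
    exact this _ hi.2
  rw [h1, Finset.sum_congr rfl h2, Finset.sum_const, nsmul_eq_mul, mul_one]
  rfl

/-- The fundamental weight identity `wt x + wt y = wt (x+y) + 2·|supp x ∩ supp y|`. -/
lemma wt_add_identity (x y : ι → ZMod 2) :
    wt x + wt y = wt (x + y) + 2 * (univ.filter fun i => x i ≠ 0 ∧ y i ≠ 0).card := by
  classical
  have hx := wt_split x (fun i => y i ≠ 0)
  have hy := wt_split y (fun i => x i ≠ 0)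
  have hxy := wt_split (x + y) (fun i => x i ≠ 0)
  have e1 : (univ.filter fun i => (x + y) i ≠ 0 ∧ x i ≠ 0).card
      = (univ.filter fun i => x i ≠ 0 ∧ ¬ y i ≠ 0).card := by
    congr 1
    apply Finset.filter_congr
    intro i _
    simp only [Pi.add_apply]
    have : ∀ a b : ZMod 2, ((a + b ≠ 0) ∧ a ≠ 0 ↔ a ≠ 0 ∧ ¬ b ≠ 0) := by decide
    exact this (x i) (y i)
  have e2 : (univ.filter fun i => (x + y) i ≠ 0 ∧ ¬ x i ≠ 0).card
      = (univ.filter fun i => y i ≠ 0 ∧ ¬ x i ≠ 0).card := by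
    congr 1
    apply Finset.filter_congr
    intro i _
    simp only [Pi.add_apply]
    have : ∀ a b : ZMod 2, ((a + b ≠ 0) ∧ ¬ a ≠ 0 ↔ b ≠ 0 ∧ ¬ a ≠ 0) := by decide
    exact this (x i) (y i)
  have e3 : (univ.filter fun i => y i ≠ 0 ∧ x i ≠ 0).card
      = (univ.filter fun i => x i ≠ 0 ∧ y i ≠ 0).card := by
    congr 1
    apply Finset.filter_congr
    intro i _
    exact and_comm
  omega

end Helpers

/-- The "masking" linear map that zeroes out the support of `z`. -/
def mask {ι : Type*} [Fintype ι] (z : ι → ZMod 2) :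
    (ι → ZMod 2) →ₗ[ZMod 2] (ι → ZMod 2) where
  toFun x := fun i => if z i = 0 then x i else 0
  map_add' x y := by
    funext i
    by_cases h : z i = 0 <;> simp [h]
  map_smul' c x := by
    funext i
    by_cases h : z i = 0 <;> simp [h]

lemma mask_self {ι : Type*} [Fintype ι] (z : ι → ZMod 2) : mask z z = 0 := by
  funext i
  by_cases h : z i = 0 <;> simp [mask, h]

lemma mask_apply_ne_zero {ι : Type*} [Fintype ι] (z x : ι → ZMod 2) (i : ι) :
    mask z x i ≠ 0 ↔ x i ≠ 0 ∧ z i = 0 := by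
  by_cases h : z i = 0 <;> simp [mask, h]

lemma griesmer_succ_eq (k d : ℕ) (hd : 0 < d) :
    griesmerBound (k + 1) d = d + griesmerBound k ((d + 1) / 2) := by
  unfold griesmerBound
  rw [Finset.sum_range_succ']
  have h0 : (d + 2 ^ 0 - 1) / 2 ^ 0 = d := by simp
  rw [h0, add_comm]
  congr 1
  apply Finset.sum_congr rfl
  intro i _
  have h2i : 0 < 2 ^ i := Nat.pow_pos (by norm_num)
  have h2i1 : 0 < 2 ^ (i + 1) := Nat.pow_pos (by norm_num)
  have he : 1 ≤ (d + 1) / 2 := by omega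
  have e1 : d + 2 ^ (i + 1) - 1 = (d - 1) + 2 ^ (i + 1) := by omega
  have e2 : (d + 1) / 2 + 2 ^ i - 1 = ((d + 1) / 2 - 1) + 2 ^ i := by omega
  rw [e1, e2, Nat.add_div_right _ h2i1, Nat.add_div_right _ h2i]
  have e3 : (d + 1) / 2 - 1 = (d - 1) / 2 := by omega
  rw [e3, Nat.div_div_eq_div_mul, pow_succ, mul_comm]

lemma griesmer_mono (d : ℕ) {k m : ℕ} (h : k ≤ m) :
    griesmerBound k d ≤ griesmerBound m d := by
  unfold griesmerBound
  exact Finset.sum_le_sum_of_subset (Finset.range_subset_range.mpr h)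

attribute [local instance] Classical.propDecidable

set_option maxHeartbeats 1000000 in
set_option maxRecDepth 8000 in
/-- Griesmer bound: the support of a `k`-dimensional binary code with all nonzero
weights at least `d` has at least `griesmerBound k d` coordinates. -/
lemma griesmer_aux : ∀ (k : ℕ) (d : ℕ), 0 < d →
    ∀ (C : Submodule (ZMod 2) (Fin 72 → ZMod 2)),
      Module.finrank (ZMod 2) C = k →
      (∀ x ∈ C, x ≠ 0 → d ≤ wt x) →
      griesmerBound k d ≤ (univ.filter fun i => ∃ x ∈ C, x i ≠ 0).card := by
  intro k
  induction k with
  | zero => intro d hd C _ _; simp [griesmerBound]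
  | succ k IH =>
    intro d hd C hrk hmin
    classical
    -- pick a nonzero codeword of minimal weight
    have hCbot : C ≠ ⊥ := by
      intro hb; rw [hb] at hrk; simp at hrk
    obtain ⟨z0, hz0C, hz00⟩ := Submodule.exists_mem_ne_zero_of_ne_bot hCbot
    have hSne : (univ.filter fun x => x ∈ C ∧ x ≠ 0).Nonempty :=
      ⟨z0, by simp [hz0C, hz00]⟩
    obtain ⟨z, hzS, hzmin⟩ := Finset.exists_min_image _ wt hSne
    simp only [mem_filter, mem_univ, true_and] at hzS
    obtain ⟨hzC, hz0⟩ := hzS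
    have hwmin : ∀ x ∈ C, x ≠ 0 → wt z ≤ wt x := by
      intro x hx hx0
      exact hzmin x (by simp [hx, hx0])
    have hdw : d ≤ wt z := hmin z hzC hz0
    -- the residual code
    set φ : C →ₗ[ZMod 2] (Fin 72 → ZMod 2) := (mask z).comp C.subtype with hφ
    set B : Submodule (ZMod 2) (Fin 72 → ZMod 2) := LinearMap.range φ with hB
    -- kernel of φ is the span of z
    have hker : LinearMap.ker φ = Submodule.span (ZMod 2) {(⟨z, hzC⟩ : C)} := by
      apply le_antisymm
      · intro x hx
        simp only [LinearMap.mem_ker, hφ, LinearMap.comp_apply, Submodule.coe_subtype] at hx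
        have hxz : ∀ i, z i = 0 → (x : Fin 72 → ZMod 2) i = 0 := by
          intro i hi
          have := congrFun hx i
          simpa [mask, hi] using this
        by_cases hx0 : x = 0
        · simp [hx0]
        · -- show x = z
          have hxne : (x : Fin 72 → ZMod 2) ≠ 0 := by
            intro h
            exact hx0 (Subtype.ext h)
          have hxez : (x : Fin 72 → ZMod 2) = z := by
            by_contra hxz'
            set v : Fin 72 → ZMod 2 := (x : Fin 72 → ZMod 2) + z with hv
            have hvC : v ∈ C := C.add_mem x.2 hzC
            have hv0 : v ≠ 0 := by
              intro h
              apply hxz'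
              funext i
              have := congrFun h i
              simp only [hv, Pi.add_apply, Pi.zero_apply] at this
              have hd2 : ∀ a b : ZMod 2, a + b = 0 → a = b := by decide
              exact hd2 _ _ this
            -- wt x + wt v = w
            have hcount : wt (x : Fin 72 → ZMod 2) + wt v = wt z := by
              unfold wt
              rw [← Finset.card_union_of_disjoint]
              · congr 1
                ext i
                simp only [mem_union, mem_filter, mem_univ, true_and, hv, Pi.add_apply]
                have := hxz i
                revert this
                generalize (x : Fin 72 → ZMod 2) i = a
                generalize z i = c
                revert a c; decide
              · rw [Finset.disjoint_filter]
                intro i _ hxi hvi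
                simp only [hv, Pi.add_apply] at hvi
                have hzi : z i ≠ 0 := fun h => hxi (hxz i h)
                revert hxi hvi hzi
                generalize (x : Fin 72 → ZMod 2) i = a
                generalize z i = c
                revert a c; decide
            have h1 := hwmin _ x.2 hxne
            have h2 := hwmin _ hvC hv0
            omega
          exact Submodule.mem_span_singleton.mpr ⟨1, by
            apply Subtype.ext
            simp [hxez]⟩
      · rw [Submodule.span_le, Set.singleton_subset_iff]
        simp only [SetLike.mem_coe, LinearMap.mem_ker, hφ, LinearMap.comp_apply,
          Submodule.coe_subtype]
        exact mask_self z
    -- rank of B is k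
    have hz'ne : (⟨z, hzC⟩ : C) ≠ 0 := by
      intro h
      exact hz0 (by simpa using congrArg (Submodule.subtype C) h)
    have hrkB : Module.finrank (ZMod 2) B = k := by
      rw [hB]
      have := LinearMap.finrank_range_add_finrank_ker φ
      rw [hker, finrank_span_singleton hz'ne, hrk] at this
      omega
    -- minimal weight of B
    have hminB : ∀ b ∈ B, b ≠ 0 → (d + 1) / 2 ≤ wt b := by
      intro b hb hb0
      obtain ⟨y, rfl⟩ := hb
      set y1 : Fin 72 → ZMod 2 := (y : Fin 72 → ZMod 2) with hy1
      have hy1C : y1 ∈ C := y.2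
      have hy1ne : y1 ≠ 0 := by
        intro h
        apply hb0
        simp only [hφ, LinearMap.comp_apply, Submodule.coe_subtype, ← hy1, h, map_zero]
      have hbval : φ y = mask z y1 := rfl
      rw [hbval] at hb0 ⊢
      -- weight of mask z y1
      have hwb : wt (mask z y1) = (univ.filter fun i => y1 i ≠ 0 ∧ z i = 0).card := by
        unfold wt
        congr 1
        apply Finset.filter_congr
        intro i _
        exact mask_apply_ne_zero z y1 i
      have hsy := wt_split y1 (fun i => z i = 0)
      have hsz := wt_split z (fun i => y1 i ≠ 0)
      have hsyz := wt_split (y1 + z) (fun i => z i = 0)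
      -- identify the pieces
      have p1 : (univ.filter fun i => (y1 + z) i ≠ 0 ∧ z i = 0).card
          = (univ.filter fun i => y1 i ≠ 0 ∧ z i = 0).card := by
        congr 1; apply Finset.filter_congr; intro i _
        simp only [Pi.add_apply]
        have : ∀ a c : ZMod 2, (a + c ≠ 0 ∧ c = 0 ↔ a ≠ 0 ∧ c = 0) := by decide
        exact this (y1 i) (z i)
      have p2 : (univ.filter fun i => (y1 + z) i ≠ 0 ∧ ¬ z i = 0).card
          = (univ.filter fun i => ¬ y1 i ≠ 0 ∧ z i ≠ 0).card := by
        congr 1; apply Finset.filter_congr; intro i _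
        simp only [Pi.add_apply]
        have : ∀ a c : ZMod 2, (a + c ≠ 0 ∧ ¬ c = 0 ↔ ¬ a ≠ 0 ∧ c ≠ 0) := by decide
        exact this (y1 i) (z i)
      have p3 : (univ.filter fun i => z i ≠ 0 ∧ y1 i ≠ 0).card
          = (univ.filter fun i => y1 i ≠ 0 ∧ ¬ z i = 0).card := by
        congr 1; apply Finset.filter_congr; intro i _
        constructor
        · rintro ⟨h1, h2⟩; exact ⟨h2, h1⟩
        · rintro ⟨h1, h2⟩; exact ⟨h2, h1⟩
      have p4 : (univ.filter fun i => z i ≠ 0 ∧ ¬ y1 i ≠ 0).card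
          = (univ.filter fun i => ¬ y1 i ≠ 0 ∧ z i ≠ 0).card := by
        congr 1; apply Finset.filter_congr; intro i _
        constructor
        · rintro ⟨h1, h2⟩; exact ⟨h2, h1⟩
        · rintro ⟨h1, h2⟩; exact ⟨h2, h1⟩
      -- y1 + z is a nonzero codeword
      have hyzC : y1 + z ∈ C := C.add_mem hy1C hzC
      have hyzne : y1 + z ≠ 0 := by
        intro h
        apply hb0
        have : y1 = z := by
          funext i
          have := congrFun h i
          simp only [Pi.add_apply, Pi.zero_apply] at this
          have hd2 : ∀ a b : ZMod 2, a + b = 0 → a = b := by decide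
          exact hd2 _ _ this
        rw [this]
        exact mask_self z
      have q1 := hwmin _ hy1C hy1ne
      have q2 := hwmin _ hyzC hyzne
      omega
    -- support of B is inside support of C minus support of z
    have hsupp : (univ.filter fun i => ∃ b ∈ B, b i ≠ 0)
        ⊆ (univ.filter fun i => ∃ x ∈ C, x i ≠ 0) \ (univ.filter fun i => z i ≠ 0) := by
      intro i hi
      simp only [mem_filter, mem_univ, true_and] at hi
      obtain ⟨b, hbB, hbi⟩ := hi
      obtain ⟨y, rfl⟩ := hbB
      have := (mask_apply_ne_zero z (y : Fin 72 → ZMod 2) i).mp hbi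
      simp only [mem_sdiff, mem_filter, mem_univ, true_and]
      exact ⟨⟨(y : Fin 72 → ZMod 2), y.2, this.1⟩, by simp [this.2]⟩
    have hzsub : (univ.filter fun i => z i ≠ 0) ⊆ (univ.filter fun i => ∃ x ∈ C, x i ≠ 0) := by
      intro i hi
      simp only [mem_filter, mem_univ, true_and] at hi ⊢
      exact ⟨z, hzC, hi⟩
    have hcard1 : (univ.filter fun i => ∃ b ∈ B, b i ≠ 0).card
        ≤ (univ.filter fun i => ∃ x ∈ C, x i ≠ 0).card - wt z := by
      calc (univ.filter fun i => ∃ b ∈ B, b i ≠ 0).card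
          ≤ ((univ.filter fun i => ∃ x ∈ C, x i ≠ 0) \ (univ.filter fun i => z i ≠ 0)).card :=
            Finset.card_le_card hsupp
        _ = (univ.filter fun i => ∃ x ∈ C, x i ≠ 0).card - wt z := by
            rw [Finset.card_sdiff_of_subset hzsub]
            unfold wt
            congr 1
    have hwle : wt z ≤ (univ.filter fun i => ∃ x ∈ C, x i ≠ 0).card :=
      Finset.card_le_card hzsub
    have hIH := IH ((d + 1) / 2) (Nat.div_pos (Nat.succ_le_succ hd) Nat.zero_lt_two) B hrkB hminB
    rw [griesmer_succ_eq k d hd]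
    generalize hN : (univ.filter fun i => ∃ x ∈ C, x i ≠ 0).card = N at hcard1 hwle ⊢
    generalize hM : (univ.filter fun i => ∃ b ∈ B, b i ≠ 0).card = M at hcard1 hIH
    clear * - hIH hcard1 hwle hdw
    omega

lemma zmod2_natCast_eq_zero {n : ℕ} (h : (n : ZMod 2) = 0) : 2 ∣ n :=
  (ZMod.natCast_eq_zero_iff n 2).mp h

set_option maxHeartbeats 1000000 in
set_option maxRecDepth 8000 in
theorem stmt19 :
    ¬ ∃ C : Submodule (ZMod 2) (Fin 72 → ZMod 2),
      Module.finrank (ZMod 2) C = 7 ∧ SelfOrthogonal C ∧ HasMinDist C 34 := by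
  rintro ⟨C, hrk, hso, hex, hmin⟩
  classical
  -- overlaps of codewords are even
  have hov2 : ∀ x ∈ C, ∀ y ∈ C, 2 ∣ (univ.filter fun i => x i ≠ 0 ∧ y i ≠ 0).card := by
    intro x hx y hy
    apply zmod2_natCast_eq_zero
    have h := hso x hx y hy
    have h3 : wt (fun i => x i * y i) = (univ.filter fun i => x i ≠ 0 ∧ y i ≠ 0).card := by
      unfold wt
      congr 1
      apply Finset.filter_congr
      intro i _
      have : ∀ a b : ZMod 2, (a * b ≠ 0 ↔ a ≠ 0 ∧ b ≠ 0) := by decide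
      exact this (x i) (y i)
    calc ((univ.filter fun i => x i ≠ 0 ∧ y i ≠ 0).card : ZMod 2)
        = (wt (fun i => x i * y i) : ZMod 2) := by rw [h3]
      _ = ∑ i, x i * y i := (sum_eq_wt _).symm
      _ = 0 := h
  -- weights of codewords are even
  have heven : ∀ x ∈ C, 2 ∣ wt x := by
    intro x hx
    have h := hov2 x hx x hx
    have h3 : (univ.filter fun i => x i ≠ 0 ∧ x i ≠ 0).card = wt x := by
      unfold wt
      congr 1
      apply Finset.filter_congr
      intro i _
      exact ⟨fun h' => h'.1, fun h' => ⟨h', h'⟩⟩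
    rwa [h3] at h
  -- the half-weight linear functional
  have hgadd : ∀ x y : C, ((wt ((x : Fin 72 → ZMod 2) + (y : Fin 72 → ZMod 2)) / 2 : ℕ) : ZMod 2)
      = ((wt (x : Fin 72 → ZMod 2) / 2 : ℕ) : ZMod 2)
        + ((wt (y : Fin 72 → ZMod 2) / 2 : ℕ) : ZMod 2) := by
    intro x y
    obtain ⟨m, hm⟩ := hov2 _ x.2 _ y.2
    have hid := wt_add_identity (x : Fin 72 → ZMod 2) (y : Fin 72 → ZMod 2)
    obtain ⟨a, ha⟩ := heven _ x.2
    obtain ⟨b, hb⟩ := heven _ y.2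
    obtain ⟨c, hc⟩ := heven _ (C.add_mem x.2 y.2)
    have e1 : wt (x : Fin 72 → ZMod 2) / 2 = a := by omega
    have e2 : wt (y : Fin 72 → ZMod 2) / 2 = b := by omega
    have e3 : wt ((x : Fin 72 → ZMod 2) + (y : Fin 72 → ZMod 2)) / 2 = c := by omega
    have key : a + b = c + 2 * m := by omega
    have hcast := congrArg (fun n : ℕ => (n : ZMod 2)) key
    push_cast at hcast
    have h20 : (2 : ZMod 2) = 0 := by decide
    rw [e1, e2, e3, hcast, h20]
    ring
  obtain ⟨g, hg1⟩ : ∃ g : C →ₗ[ZMod 2] ZMod 2,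
      ∀ x : C, g x = ((wt (x : Fin 72 → ZMod 2) / 2 : ℕ) : ZMod 2) := by
    refine ⟨⟨⟨fun x => ((wt (x : Fin 72 → ZMod 2) / 2 : ℕ) : ZMod 2), ?_⟩, ?_⟩, fun _ => rfl⟩
    · intro x y
      simpa using hgadd x y
    · intro c x
      have hc : ∀ c : ZMod 2, c = 0 ∨ c = 1 := by decide
      rcases hc c with rfl | rfl
      · simp [wt]
      · simp
  -- the doubly-even subcode
  have hC0rank : 6 ≤ Module.finrank (ZMod 2) ((LinearMap.ker g).map C.subtype) := by
    rw [Submodule.finrank_map_subtype_eq]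
    have h1 := LinearMap.finrank_range_add_finrank_ker g
    rw [hrk] at h1
    have h2 : Module.finrank (ZMod 2) (LinearMap.range g) ≤ 1 := by
      have h3 := Submodule.finrank_le (LinearMap.range g)
      simpa using h3
    omega
  have hC0min : ∀ x ∈ (LinearMap.ker g).map C.subtype, x ≠ 0 → 36 ≤ wt x := by
    intro x hx hx0
    obtain ⟨y, hyk, rfl⟩ := Submodule.mem_map.mp hx
    have hco : C.subtype y = (y : Fin 72 → ZMod 2) := rfl
    rw [hco] at hx0 ⊢
    have h34 := hmin _ y.2 hx0
    obtain ⟨a, ha⟩ := heven _ y.2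
    have hg0 : ((wt (y : Fin 72 → ZMod 2) / 2 : ℕ) : ZMod 2) = 0 := by
      rw [← hg1 y]
      exact hyk
    have h4 := zmod2_natCast_eq_zero hg0
    omega
  have happ := griesmer_aux (Module.finrank (ZMod 2) ((LinearMap.ker g).map C.subtype)) 36
    (by norm_num) _ rfl hC0min
  have h72 : (univ.filter fun i => ∃ x ∈ (LinearMap.ker g).map C.subtype, x i ≠ 0).card ≤ 72 := by
    calc (univ.filter fun i => ∃ x ∈ (LinearMap.ker g).map C.subtype, x i ≠ 0).card
        ≤ (univ : Finset (Fin 72)).card := Finset.card_filter_le _ _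
      _ = 72 := by simp
  have hmono := griesmer_mono 36 hC0rank
  have h73 : griesmerBound 6 36 = 73 := by
    simp [griesmerBound, Finset.sum_range_succ]
  generalize hK : Module.finrank (ZMod 2) ((LinearMap.ker g).map C.subtype) = K
    at happ hmono
  generalize hM : (univ.filter fun i => ∃ x ∈ (LinearMap.ker g).map C.subtype, x i ≠ 0).card = M
    at happ h72
  clear * - happ h72 hmono h73
  omega
end
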